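/- (Shattering/decisive dichotomy) Let S ⊆ P(Ω) be a union-closed set system and E a spread in Ω. Then either (S): there is a spread G refining E and a sequence (a_i)_{i≥1} in S which shatters G, or (D): there is a spread F refining E and an S-decisive colouring of F. -/

import Mathlib

/-- A spread: pairwise disjoint finite nonempty sets with cardinality tending to ∞. -/
def IsSpread {Ω : Type*} (E : ℕ → Set Ω) : Prop :=
  (∀ n, (E n).Finite) ∧ (∀ n, (E n).Nonempty) ∧
  (∀ m n, m ≠ n → Disjoint (E m) (E n)) ∧
  (∀ k : ℕ, ∃ N : ℕ, ∀ n ≥ N, k ≤ (E n).ncard)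

/-- `C` is a colouring of the spread `E`: a finite partition of `Ω` each of whose
classes meets `E n` in a set of cardinality tending to infinity. -/
def IsColouring {Ω : Type*} (C : Finset (Set Ω)) (E : ℕ → Set Ω) : Prop :=
  (⋃₀ (C : Set (Set Ω)) = Set.univ) ∧
  (∀ D₁ ∈ C, ∀ D₂ ∈ C, D₁ ≠ D₂ → Disjoint D₁ D₂) ∧
  (∀ D ∈ C, ∀ k : ℕ, ∃ N : ℕ, ∀ n ≥ N, k ≤ (D ∩ E n).ncard)

/-- `C₀ ∈ C` is a decisive colour class for `S` with respect to the spread `E`. -/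
def IsDecisiveClass {Ω : Type*} (S : Set (Set Ω)) (C : Finset (Set Ω))
    (C₀ : Set Ω) (E : ℕ → Set Ω) : Prop :=
  C₀ ∈ C ∧ ∀ x ∈ S, ∃ B : ℕ, ∀ n : ℕ,
    (x ∩ C₀ ∩ E n).ncard ≤ B ∨ ∃ D ∈ C, (xᶜ ∩ D ∩ E n).ncard ≤ B

/-- `F` is a refinement of the spread `E`. -/
def Refines {Ω : Type*} (F E : ℕ → Set Ω) : Prop :=
  IsSpread F ∧ ∃ g : ℕ → ℕ, Function.Injective g ∧ ∀ j, F j ⊆ E (g j)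

/-- `(a j)` shatters the spread `G`. -/
def Shatters {Ω : Type*} (a : ℕ → Set Ω) (G : ℕ → Set Ω) : Prop :=
  ∀ (m : ℕ) (y : Fin m → Set Ω), (∀ j, y j = a j ∨ y j = (a j)ᶜ) →
    ∀ k : ℕ, ∃ N : ℕ, ∀ n ≥ N, k ≤ (G n ∩ ⋂ j, y j).ncard


section Aux

variable {Ω : Type*}

def sideSet (b : Bool) (s : Set Ω) : Set Ω := cond b s sᶜ

@[simp] lemma sideSet_true (s : Set Ω) : sideSet true s = s := rfl
@[simp] lemma sideSet_false (s : Set Ω) : sideSet false s = sᶜ := rfl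

def cellSet (a : ℕ → Set Ω) (i : ℕ) (p : Fin i → Bool) : Set Ω :=
  ⋂ j : Fin i, sideSet (p j) (a j)

lemma mem_cellSet {a : ℕ → Set Ω} {i : ℕ} {p : Fin i → Bool} {ω : Ω} :
    ω ∈ cellSet a i p ↔ ∀ j : Fin i, ω ∈ sideSet (p j) (a j) := Set.mem_iInter

lemma cellSet_disjoint {a : ℕ → Set Ω} {i : ℕ} {p q : Fin i → Bool} (hpq : p ≠ q) :
    Disjoint (cellSet a i p) (cellSet a i q) := by
  obtain ⟨j, hj⟩ := Function.ne_iff.1 hpq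
  have h1 : cellSet a i p ⊆ sideSet (p j) (a j) := Set.iInter_subset _ j
  have h2 : cellSet a i q ⊆ sideSet (q j) (a j) := Set.iInter_subset _ j
  refine Set.disjoint_of_subset h1 h2 ?_
  cases hb : p j <;> cases hc : q j
  · exact absurd (hb ▸ hc ▸ rfl) hj
  · simpa using disjoint_compl_left
  · simpa using disjoint_compl_right
  · exact absurd (hb ▸ hc ▸ rfl) hj

lemma exists_mem_cellSet (a : ℕ → Set Ω) (i : ℕ) (ω : Ω) :
    ∃ p : Fin i → Bool, ω ∈ cellSet a i p := by
  classical
  refine ⟨fun j => if ω ∈ a j then true else false, ?_⟩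
  rw [mem_cellSet]
  intro j
  by_cases h : ω ∈ a (j : ℕ) <;> simp [h]

lemma cellSet_congr {a b : ℕ → Set Ω} {i : ℕ} (h : ∀ m < i, a m = b m) (p : Fin i → Bool) :
    cellSet a i p = cellSet b i p := by
  unfold cellSet
  exact Set.iInter_congr fun j => by rw [h j j.isLt]

lemma cellSet_succ (a : ℕ → Set Ω) (i : ℕ) (z : Set Ω) (q : Fin (i + 1) → Bool) :
    cellSet (Function.update a i z) (i + 1) q =
      cellSet a i (fun j => q j.castSucc) ∩ sideSet (q (Fin.last i)) z := by
  ext ω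
  simp only [cellSet, Set.mem_iInter, Set.mem_inter_iff]
  constructor
  · intro h
    refine ⟨fun j => ?_, ?_⟩
    · have := h j.castSucc
      rwa [show ((j.castSucc : Fin (i+1)) : ℕ) = (j : ℕ) from rfl,
        Function.update_of_ne (Nat.ne_of_lt j.isLt) z a] at this
    · have := h (Fin.last i)
      rwa [show ((Fin.last i : Fin (i+1)) : ℕ) = i from rfl, Function.update_self] at this
  · rintro ⟨h1, h2⟩ j
    refine Fin.lastCases ?_ ?_ j
    · rwa [show ((Fin.last i : Fin (i+1)) : ℕ) = i from rfl, Function.update_self]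
    · intro j
      rw [show ((j.castSucc : Fin (i+1)) : ℕ) = (j : ℕ) from rfl,
        Function.update_of_ne (Nat.ne_of_lt j.isLt) z a]
      exact h1 j

lemma exists_strictMono_forall_lt (v : ℕ → ℕ) (h : ∀ B, ∃ n, B < v n) :
    ∃ ψ : ℕ → ℕ, StrictMono ψ ∧ ∀ m, m < v (ψ m) := by
  have h' : ∀ B N : ℕ, ∃ n, N ≤ n ∧ B < v n := by
    intro B N
    obtain ⟨n, hn⟩ := h (max B ((Finset.range N).sup v))
    refine ⟨n, ?_, lt_of_le_of_lt (le_max_left _ _) hn⟩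
    by_contra hlt
    push_neg at hlt
    have h1 : v n ≤ (Finset.range N).sup v := Finset.le_sup (Finset.mem_range.2 hlt)
    have h2 := lt_of_le_of_lt (le_max_right _ _) hn
    omega
  choose f hf1 hf2 using h'
  refine ⟨fun m => Nat.rec (f 0 0) (fun m ih => f (m + 1) (ih + 1)) m, ?_, ?_⟩
  · apply strictMono_nat_of_lt_succ
    intro m
    exact lt_of_lt_of_le (Nat.lt_succ_self _) (hf1 (m + 1) _)
  · intro m
    cases m with
    | zero => exact hf2 0 0
    | succ m => exact hf2 (m + 1) _

def GoodP (S : Set (Set Ω)) (E : ℕ → Set Ω) (a : ℕ → Set Ω) (i : ℕ)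
    (F : ℕ → Set Ω) : Prop :=
  (∀ m < i, a m ∈ S) ∧ Refines F E ∧
    ∀ (p : Fin i → Bool) (k : ℕ), ∃ N, ∀ n ≥ N, k ≤ (F n ∩ cellSet a i p).ncard

end Aux

lemma extendGood {Ω : Type*} {S : Set (Set Ω)} (hUC : ∀ a ∈ S, ∀ b ∈ S, a ∪ b ∈ S)
    {E : ℕ → Set Ω}
    (hD : ¬ ∃ F : ℕ → Set Ω, Refines F E ∧ ∃ C : Finset (Set Ω), IsColouring C F ∧
        ∃ C₀, IsDecisiveClass S C C₀ F)
    (a : ℕ → Set Ω) (i : ℕ) (F : ℕ → Set Ω) (h : GoodP S E a i F) :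
    ∃ x F', GoodP S E (Function.update a i x) (i + 1) F' := by
  classical
  obtain ⟨haS, hFE, hcell⟩ := h
  obtain ⟨hF, g, hg, hsub⟩ := hFE
  have hfin : ∀ n, (F n).Finite := hF.1
  have main : ∀ T : Finset (Fin i → Bool), ∃ (z : Set Ω) (φ : ℕ → ℕ),
      StrictMono φ ∧ (z ∈ S ∨ z = ∅) ∧
      (∀ p ∈ T, ∀ m : ℕ, m < ((F (φ m) ∩ cellSet a i p) ∩ z).ncard) ∧
      (∀ (p : Fin i → Bool) (m : ℕ), m < ((F (φ m) ∩ cellSet a i p) ∩ zᶜ).ncard) := by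
    intro T
    induction T using Finset.induction_on with
    | empty =>
      choose N hN using hcell
      have hv : ∀ B : ℕ, ∃ n, B < Finset.univ.inf' Finset.univ_nonempty
          (fun p : Fin i → Bool => (F n ∩ cellSet a i p).ncard) := by
        intro B
        refine ⟨Finset.univ.sup (fun p : Fin i → Bool => N p (B + 1)), ?_⟩
        rw [Finset.lt_inf'_iff]
        intro p _
        have := hN p (B + 1) (Finset.univ.sup fun p : Fin i → Bool => N p (B + 1))
          (Finset.le_sup (f := fun p : Fin i → Bool => N p (B + 1)) (Finset.mem_univ p))
        omega
      obtain ⟨φ, hφ, hφ2⟩ := exists_strictMono_forall_lt _ hv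
      refine ⟨∅, φ, hφ, Or.inr rfl, by simp, ?_⟩
      intro p m
      have h2 := lt_of_lt_of_le (hφ2 m) (Finset.inf'_le _ (Finset.mem_univ p))
      simpa using h2
    | @insert p₀ T hp₀T IH =>
      obtain ⟨z, φ, hφ, hzS, hbig, hco⟩ := IH
      set G : ℕ → Set Ω := fun m => F (φ m) ∩ zᶜ with hGdef
      have hGsub : ∀ m, G m ⊆ F (φ m) := fun m => Set.inter_subset_left
      have hGfin : ∀ m, (G m).Finite := fun m => (hfin _).subset (hGsub m)
      have hcoG : ∀ (p : Fin i → Bool) (m : ℕ), m < (cellSet a i p ∩ G m).ncard := by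
        intro p m
        refine lt_of_lt_of_le (hco p m) (Set.ncard_le_ncard ?_ ((hGfin m).inter_of_right _))
        intro ω hω
        exact ⟨hω.1.2, hω.1.1, hω.2⟩
      have hGne : ∀ m, (G m).Nonempty := by
        intro m
        have h1 := hcoG (fun _ => true) m
        have hne : (cellSet a i (fun _ => true) ∩ G m).Nonempty := by
          apply Set.nonempty_of_ncard_ne_zero; omega
        exact hne.mono Set.inter_subset_right
      have hGspread : IsSpread G := by
        refine ⟨hGfin, hGne, ?_, ?_⟩
        · intro m n hmn
          exact Set.disjoint_of_subset (hGsub m) (hGsub n)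
            (hF.2.2.1 _ _ (fun hc => hmn (hφ.injective hc)))
        · intro k
          refine ⟨k, fun n hn => ?_⟩
          have h1 := hcoG (fun _ => true) n
          have h2 : (cellSet a i (fun _ => true) ∩ G n).ncard ≤ (G n).ncard :=
            Set.ncard_le_ncard Set.inter_subset_right (hGfin n)
          omega
      have hGE : Refines G E :=
        ⟨hGspread, g ∘ φ, hg.comp hφ.injective, fun j => (hGsub j).trans (hsub (φ j))⟩
      set C : Finset (Set Ω) := Finset.univ.image (fun p : Fin i → Bool => cellSet a i p)
        with hCdef
      have hmemC : ∀ p : Fin i → Bool, cellSet a i p ∈ C := fun p =>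
        Finset.mem_image.2 ⟨p, Finset.mem_univ p, rfl⟩
      have hcolour : IsColouring C G := by
        refine ⟨?_, ?_, ?_⟩
        · ext ω
          simp only [Set.mem_sUnion, Set.mem_univ, iff_true]
          obtain ⟨p, hp⟩ := exists_mem_cellSet a i ω
          exact ⟨cellSet a i p, by exact_mod_cast hmemC p, hp⟩
        · intro D₁ hD₁ D₂ hD₂ hne
          obtain ⟨p, _, rfl⟩ := Finset.mem_image.1 hD₁
          obtain ⟨q, _, rfl⟩ := Finset.mem_image.1 hD₂
          exact cellSet_disjoint (fun hpq => hne (by rw [hpq]))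
        · intro D hDC k
          obtain ⟨p, _, rfl⟩ := Finset.mem_image.1 hDC
          refine ⟨k, fun n hn => ?_⟩
          have := hcoG p n
          omega
      have hndec : ¬ IsDecisiveClass S C (cellSet a i p₀) G := by
        intro hdec
        exact hD ⟨G, hGE, C, hcolour, _, hdec⟩
      rw [IsDecisiveClass, not_and] at hndec
      have hndec2 := hndec (hmemC p₀)
      push_neg at hndec2
      obtain ⟨x, hxS, hx⟩ := hndec2
      have hCne : C.Nonempty := ⟨_, hmemC p₀⟩
      have hv : ∀ B : ℕ, ∃ n, B < min ((x ∩ cellSet a i p₀ ∩ G n).ncard)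
          (C.inf' hCne fun D => (xᶜ ∩ D ∩ G n).ncard) := by
        intro B
        obtain ⟨n, h1, h2⟩ := hx B
        exact ⟨n, lt_min h1 ((Finset.lt_inf'_iff hCne).2 h2)⟩
      obtain ⟨ψ, hψ, hψ2⟩ := exists_strictMono_forall_lt _ hv
      refine ⟨z ∪ x, φ ∘ ψ, hφ.comp hψ, ?_, ?_, ?_⟩
      · left
        rcases hzS with hz | rfl
        · exact hUC z hz x hxS
        · simpa using hxS
      · intro p hp m
        rcases Finset.mem_insert.1 hp with rfl | hpT
        · have h1 := lt_of_lt_of_le (hψ2 m) (min_le_left _ _)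
          refine lt_of_lt_of_le h1 (Set.ncard_le_ncard ?_ ?_)
          · intro ω hω
            exact ⟨⟨hω.2.1, hω.1.2⟩, Or.inr hω.1.1⟩
          · exact (hfin _).subset (fun ω hω => hω.1.1)
        · have h1 := hbig p hpT (ψ m)
          have h2 : m ≤ ψ m := hψ.le_apply
          have h3 : ((F (φ (ψ m)) ∩ cellSet a i p) ∩ z).ncard ≤
              ((F ((φ ∘ ψ) m) ∩ cellSet a i p) ∩ (z ∪ x)).ncard :=
            Set.ncard_le_ncard (fun ω hω => ⟨hω.1, Or.inl hω.2⟩)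
              ((hfin _).subset (fun ω hω => hω.1.1))
          omega
      · intro p m
        have h1 := lt_of_lt_of_le (hψ2 m)
          ((min_le_right _ _).trans (Finset.inf'_le _ (hmemC p)))
        refine lt_of_lt_of_le h1
          (Set.ncard_le_ncard ?_ ((hfin _).subset (fun ω hω => hω.1.1)))
        intro ω hω
        obtain ⟨⟨hxc, hcp⟩, hFω, hzc⟩ := hω
        exact ⟨⟨hFω, hcp⟩, fun hc => hc.elim hzc hxc⟩
  obtain ⟨z, φ, hφ, hzS, hbig, hco⟩ := main Finset.univ
  have hz : z ∈ S := by
    rcases hzS with hz | rfl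
    · exact hz
    · exfalso
      have := hbig (fun _ => true) (Finset.mem_univ _) 0
      simpa using this
  refine ⟨z, F ∘ φ, ?_, ?_, ?_⟩
  · intro m hm
    rcases Nat.lt_succ_iff_lt_or_eq.1 hm with h1 | rfl
    · rw [Function.update_of_ne (Nat.ne_of_lt h1)]
      exact haS m h1
    · rw [Function.update_self]; exact hz
  · refine ⟨⟨fun n => hfin _, fun n => hF.2.1 _, ?_, ?_⟩, g ∘ φ,
      hg.comp hφ.injective, fun j => hsub _⟩
    · intro m n hmn; exact hF.2.2.1 _ _ (fun hc => hmn (hφ.injective hc))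
    · intro k
      refine ⟨k, fun n hn => ?_⟩
      have h1 := hco (fun _ => true) n
      have h2 : ((F (φ n) ∩ cellSet a i (fun _ => true)) ∩ zᶜ).ncard ≤
          ((F ∘ φ) n).ncard :=
        Set.ncard_le_ncard (fun ω hω => hω.1.1) (hfin _)
      omega
  · intro q k
    refine ⟨k, fun n hn => ?_⟩
    rw [cellSet_succ]
    simp only [Function.comp_apply]
    cases hq : q (Fin.last i)
    · rw [sideSet_false, ← Set.inter_assoc]
      have := hco (fun j => q j.castSucc) n
      omega
    · rw [sideSet_true, ← Set.inter_assoc]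
      have := hbig (fun j => q j.castSucc) (Finset.mem_univ _) n
      omega

noncomputable def chainSeq {Ω : Type*} (S : Set (Set Ω)) (E : ℕ → Set Ω)
    (hP : ∀ (a : ℕ → Set Ω) (i : ℕ) (F : ℕ → Set Ω), GoodP S E a i F →
      ∃ x F', GoodP S E (Function.update a i x) (i + 1) F')
    (h₀ : GoodP S E (fun _ => ∅) 0 E) :
    ∀ n : ℕ, {q : (ℕ → Set Ω) × (ℕ → Set Ω) // GoodP S E q.1 n q.2}
  | 0 => ⟨(fun _ => ∅, E), h₀⟩
  | n + 1 =>
    ⟨(Function.update (chainSeq S E hP h₀ n).1.1 n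
        (hP _ n _ (chainSeq S E hP h₀ n).2).choose,
      (hP _ n _ (chainSeq S E hP h₀ n).2).choose_spec.choose),
     (hP _ n _ (chainSeq S E hP h₀ n).2).choose_spec.choose_spec⟩

lemma chainSeq_coh {Ω : Type*} (S : Set (Set Ω)) (E : ℕ → Set Ω)
    (hP : ∀ (a : ℕ → Set Ω) (i : ℕ) (F : ℕ → Set Ω), GoodP S E a i F →
      ∃ x F', GoodP S E (Function.update a i x) (i + 1) F')
    (h₀ : GoodP S E (fun _ => ∅) 0 E) :
    ∀ n m, m < n →
      (chainSeq S E hP h₀ n).1.1 m = (chainSeq S E hP h₀ (m + 1)).1.1 m := by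
  intro n
  induction n with
  | zero => omega
  | succ n ih =>
    intro m hm
    rcases Nat.lt_succ_iff_lt_or_eq.1 hm with h | rfl
    · rw [show (chainSeq S E hP h₀ (n + 1)).1.1 =
        Function.update (chainSeq S E hP h₀ n).1.1 n
          (hP _ n _ (chainSeq S E hP h₀ n).2).choose from rfl,
        Function.update_of_ne (Nat.ne_of_lt h)]
      exact ih m h
    · rfl

/-- Theorem 4.4 (shattering/decisive dichotomy). -/
theorem shattering_decisive_dichotomy {Ω : Type*} (S : Set (Set Ω))
    (hUC : ∀ a ∈ S, ∀ b ∈ S, a ∪ b ∈ S)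
    (E : ℕ → Set Ω) (hE : IsSpread E) :
    (∃ G : ℕ → Set Ω, Refines G E ∧ ∃ a : ℕ → Set Ω, (∀ i, a i ∈ S) ∧ Shatters a G) ∨
    (∃ F : ℕ → Set Ω, Refines F E ∧ ∃ C : Finset (Set Ω), IsColouring C F ∧
        ∃ C₀, IsDecisiveClass S C C₀ F) := by
  classical
  by_cases hD : ∃ F : ℕ → Set Ω, Refines F E ∧ ∃ C : Finset (Set Ω), IsColouring C F ∧
      ∃ C₀, IsDecisiveClass S C C₀ F
  · exact Or.inr hD
  left
  have h₀ : GoodP S E (fun _ => ∅) 0 E := by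
    refine ⟨fun m hm => absurd hm (Nat.not_lt_zero m),
      ⟨hE, id, Function.injective_id, fun j => subset_rfl⟩, ?_⟩
    intro p k
    obtain ⟨N, hN⟩ := hE.2.2.2 k
    refine ⟨N, fun n hn => ?_⟩
    have hcell : cellSet (fun _ => (∅ : Set Ω)) 0 p = Set.univ := by
      simp [cellSet]
    rw [hcell, Set.inter_univ]
    exact hN n hn
  have hP : ∀ (a : ℕ → Set Ω) (i : ℕ) (F : ℕ → Set Ω), GoodP S E a i F →
      ∃ x F', GoodP S E (Function.update a i x) (i + 1) F' :=
    fun a i F h => extendGood hUC hD a i F h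
  set ch := chainSeq S E hP h₀ with hch
  set aG : ℕ → Set Ω := fun m => (ch (m + 1)).1.1 m with haG
  have hcoh : ∀ n m, m < n → (ch n).1.1 m = aG m :=
    fun n m hm => chainSeq_coh S E hP h₀ n m hm
  have good : ∀ n, GoodP S E aG n ((ch n).1.2) := by
    intro n
    obtain ⟨h1, h2, h3⟩ := (ch n).2
    refine ⟨fun m hm => ?_, h2, fun p k => ?_⟩
    · rw [← hcoh n m hm]; exact h1 m hm
    · have hc : cellSet aG n p = cellSet (ch n).1.1 n p :=
        cellSet_congr (fun m hm => (hcoh n m hm).symm) p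
      rw [hc]; exact h3 p k
  have haS : ∀ m, aG m ∈ S := fun m => (good (m + 1)).1 m (Nat.lt_succ_self m)
  have hre : ∀ k, Refines ((ch k).1.2) E := fun k => (good k).2.1
  have hspread : ∀ k, IsSpread ((ch k).1.2) := fun k => (hre k).1
  have hgex : ∀ k, ∃ g : ℕ → ℕ, Function.Injective g ∧ ∀ j, (ch k).1.2 j ⊆ E (g j) :=
    fun k => (hre k).2
  choose gf hginj hgsub using hgex
  have pick : ∀ k M : ℕ, ∃ n, M < gf k n ∧
      ∀ p : Fin k → Bool, k ≤ ((ch k).1.2 n ∩ cellSet aG k p).ncard := by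
    intro k M
    have h1 : ∀ p : Fin k → Bool, ∃ N, ∀ n ≥ N,
        k ≤ ((ch k).1.2 n ∩ cellSet aG k p).ncard := fun p => (good k).2.2 p k
    choose Np hNp using h1
    have hfin2 : {n : ℕ | gf k n ≤ M}.Finite := by
      have hss : {n : ℕ | gf k n ≤ M} ⊆ gf k ⁻¹' (Set.Iic M) := fun n hn => hn
      exact (((Set.finite_Iic M).preimage ((hginj k).injOn))).subset hss
    obtain ⟨b, hb⟩ := hfin2.bddAbove
    refine ⟨max (Finset.univ.sup Np) (b + 1), ?_, ?_⟩
    · by_contra hc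
      push_neg at hc
      have hmem : max (Finset.univ.sup Np) (b + 1) ∈ {n : ℕ | gf k n ≤ M} := hc
      have := hb hmem
      omega
    · intro p
      exact hNp p _ (le_trans (Finset.le_sup (Finset.mem_univ p)) (le_max_left _ _))
  choose nk hnk1 hnk2 using pick
  obtain ⟨s, hs0, hssucc⟩ : ∃ s : ℕ → ℕ, s 0 = 0 ∧
      ∀ k, s (k + 1) = max (gf k (nk k (s k))) (s k) :=
    ⟨fun k => Nat.rec 0 (fun k ih => max (gf k (nk k ih)) ih) k, rfl, fun k => rfl⟩
  set e : ℕ → ℕ := fun k => gf k (nk k (s k)) with he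
  set G : ℕ → Set Ω := fun k => (ch k).1.2 (nk k (s k)) with hG
  have hsmono : Monotone s :=
    monotone_nat_of_le_succ (fun k => by rw [hssucc]; exact le_max_right _ _)
  have hese : ∀ k, e k ≤ s (k + 1) := fun k => by rw [hssucc]; exact le_max_left _ _
  have hlte : ∀ k, s k < e k := fun k => hnk1 k (s k)
  have hemono : StrictMono e := by
    intro j k hjk
    calc e j ≤ s (j + 1) := hese j
    _ ≤ s k := hsmono hjk
    _ < e k := hlte k
  have hGsubE : ∀ k, G k ⊆ E (e k) := fun k => hgsub k _
  have hGk : ∀ k, ∀ p : Fin k → Bool, k ≤ (G k ∩ cellSet aG k p).ncard :=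
    fun k => hnk2 k (s k)
  have hGfin : ∀ k, (G k).Finite := fun k => (hspread k).1 _
  refine ⟨G, ⟨⟨hGfin, fun k => (hspread k).2.1 _, ?_, ?_⟩, e, hemono.injective, hGsubE⟩,
    aG, haS, ?_⟩
  · intro m n hmn
    exact Set.disjoint_of_subset (hGsubE m) (hGsubE n)
      (hE.2.2.1 _ _ (fun hc => hmn (hemono.injective hc)))
  · intro k
    refine ⟨k, fun n hn => ?_⟩
    have h1 := hGk n (fun _ => true)
    have h2 : (G n ∩ cellSet aG n (fun _ => true)).ncard ≤ (G n).ncard :=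
      Set.ncard_le_ncard Set.inter_subset_left (hGfin n)
    omega
  · intro m y hy k
    refine ⟨max m k, fun n hn => ?_⟩
    have hm : m ≤ n := le_trans (le_max_left _ _) hn
    have hk : k ≤ n := le_trans (le_max_right _ _) hn
    have hbex : ∀ j : Fin m, ∃ bj : Bool, sideSet bj (aG (j : ℕ)) ⊆ y j := by
      intro j
      rcases hy j with h1 | h1
      · exact ⟨true, by rw [sideSet_true, ← h1]⟩
      · exact ⟨false, by rw [sideSet_false, ← h1]⟩
    choose b hside using hbex
    have hcellsub : cellSet aG n (fun j => if h : (j : ℕ) < m then b ⟨j, h⟩ else true) ⊆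
        ⋂ j : Fin m, y j := by
      intro ω hω
      rw [Set.mem_iInter]
      intro j
      have h1 := mem_cellSet.1 hω ⟨(j : ℕ), lt_of_lt_of_le j.isLt hm⟩
      rw [dif_pos j.isLt] at h1
      exact hside j h1
    have h1 := hGk n (fun j => if h : (j : ℕ) < m then b ⟨j, h⟩ else true)
    have h2 : (G n ∩ cellSet aG n (fun j => if h : (j : ℕ) < m then b ⟨j, h⟩ else true)).ncard
        ≤ (G n ∩ ⋂ j, y j).ncard :=
      Set.ncard_le_ncard (fun ω hω => ⟨hω.1, hcellsub hω.2⟩)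
        ((hGfin n).subset Set.inter_subset_left)
    omega
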